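/- arXiv:2009.01870 — 2 statements merged into one kernel-verified Lean document; each statement's English description precedes it below -/
import Mathlib

section
/- Let m, n be integers and suppose the set {r*m + s*n : r, s ∈ ℕ} equals dℤ for some positive integer d. Then m < 0 < n (after possibly swapping so that m < n, assume m < n) and d = gcd(m, n). -/
theorem stmt_1 (m n : ℤ) (hmn : m < n) (d : ℤ) (hd : 0 < d)
    (h : {x : ℤ | ∃ r s : ℕ, x = (r : ℤ) * m + (s : ℤ) * n} =
      {x : ℤ | ∃ k : ℤ, x = d * k}) :
    m < 0 ∧ 0 < n ∧ d = (Int.gcd m n : ℤ) := by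
  have hS : ∀ x : ℤ, (∃ r s : ℕ, x = (r : ℤ) * m + (s : ℤ) * n) ↔ ∃ k : ℤ, x = d * k :=
    fun x => Set.ext_iff.mp h x
  have hdm : d ∣ m := by
    obtain ⟨k, hk⟩ := (hS m).mp ⟨1, 0, by push_cast; ring⟩
    exact ⟨k, hk⟩
  have hdn : d ∣ n := by
    obtain ⟨k, hk⟩ := (hS n).mp ⟨0, 1, by push_cast; ring⟩
    exact ⟨k, hk⟩
  obtain ⟨r, s, hrs⟩ := (hS (-d)).mpr ⟨-1, by ring⟩
  obtain ⟨r', s', hrs'⟩ := (hS d).mpr ⟨1, by ring⟩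
  have hm0 : m < 0 := by
    by_contra hm; push_neg at hm
    have h1 : 0 ≤ (r : ℤ) * m := mul_nonneg r.cast_nonneg hm
    have h2 : 0 ≤ (s : ℤ) * n := mul_nonneg s.cast_nonneg (hm.trans hmn.le)
    linarith
  have hn0 : 0 < n := by
    by_contra hn; push_neg at hn
    have h1 : (r' : ℤ) * m ≤ 0 := mul_nonpos_of_nonneg_of_nonpos r'.cast_nonneg (le_of_lt (lt_of_lt_of_le hmn hn))
    have h2 : (s' : ℤ) * n ≤ 0 := mul_nonpos_of_nonneg_of_nonpos s'.cast_nonneg hn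
    linarith
  refine ⟨hm0, hn0, Int.dvd_antisymm hd.le (Int.natCast_nonneg _) (Int.dvd_coe_gcd hdm hdn) ?_⟩
  rw [hrs']
  exact dvd_add (Dvd.dvd.mul_left (Int.gcd_dvd_left m n) _) (Dvd.dvd.mul_left (Int.gcd_dvd_right m n) _)
end

section
/- Let m and n be integers with m < 0 < n and gcd(m, n) = 1, and suppose m*n is even. Then for every integer r there exist natural numbers l, k with l*m + k*n = r and l + k even, and there exist natural numbers l', k' with l'*m + k'*n = r and l' + k' odd. -/
theorem stmt_14 (m n : ℤ) (hm : m < 0) (hn : 0 < n) (h : Int.gcd m n = 1)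
    (he : Even (m * n)) (r : ℤ) :
    (∃ l k : ℕ, (l : ℤ) * m + (k : ℤ) * n = r ∧ Even (l + k)) ∧
      (∃ l' k' : ℕ, (l' : ℤ) * m + (k' : ℤ) * n = r ∧ Odd (l' + k')) := by
  have hb : m * Int.gcdA m n + n * Int.gcdB m n = 1 := by
    have := Int.gcd_eq_gcd_ab m n
    rw [h] at this
    exact_mod_cast this.symm
  set a := Int.gcdA m n * r with ha
  set b := Int.gcdB m n * r with hbd
  have hr : a * m + b * n = r := by
    rw [ha, hbd]; linear_combination r * hb
  -- n - m is odd
  have hd : Odd (n - m) := by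
    rcases Int.even_or_odd m with hme | hmo
    · rcases Int.even_or_odd n with hne | hno
      · exfalso
        obtain ⟨u, hu⟩ := hme
        obtain ⟨v, hv⟩ := hne
        have h2 : (2 : ℤ) ∣ (Int.gcd m n : ℤ) :=
          Int.dvd_coe_gcd ⟨u, by omega⟩ ⟨v, by omega⟩
        rw [h] at h2
        omega
      · obtain ⟨u, hu⟩ := hme
        obtain ⟨v, hv⟩ := hno
        exact ⟨v - u, by omega⟩
    · rcases Int.even_or_odd n with hne | hno
      · obtain ⟨u, hu⟩ := hmo
        obtain ⟨v, hv⟩ := hne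
        exact ⟨v - u - 1, by omega⟩
      · exfalso
        obtain ⟨u, hu⟩ := hmo
        obtain ⟨v, hv⟩ := hno
        obtain ⟨w, hw⟩ := he
        rw [hu, hv] at hw
        have h2 : 2 * (w - 2 * (u * v) - u - v) = 1 := by linear_combination -hw
        omega
  have key : ∀ t : ℤ, 0 ≤ a + t * n → 0 ≤ b - t * m →
      ∃ l k : ℕ, (l : ℤ) * m + (k : ℤ) * n = r ∧ (l : ℤ) + (k : ℤ) = a + b + t * (n - m) := by
    intro t h1 h2
    refine ⟨(a + t * n).toNat, (b - t * m).toNat, ?_, ?_⟩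
    · rw [Int.toNat_of_nonneg h1, Int.toNat_of_nonneg h2]
      linear_combination hr
    · rw [Int.toNat_of_nonneg h1, Int.toNat_of_nonneg h2]
      ring
  set T := |a| + |b| with hT
  have hT0 : 0 ≤ T := by positivity
  have hTa : -T ≤ a := by
    have := neg_abs_le a
    have := abs_nonneg b
    omega
  have hTb : -T ≤ b := by
    have := neg_abs_le b
    have := abs_nonneg a
    omega
  have h1 : 0 ≤ a + T * n := by nlinarith
  have h2 : 0 ≤ b - T * m := by nlinarith
  have h1' : 0 ≤ a + (T + 1) * n := by nlinarith
  have h2' : 0 ≤ b - (T + 1) * m := by nlinarith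
  obtain ⟨l1, k1, e1, p1⟩ := key T h1 h2
  obtain ⟨l2, k2, e2, p2⟩ := key (T + 1) h1' h2'
  have hdiff : (l2 : ℤ) + k2 = (l1 : ℤ) + k1 + (n - m) := by
    rw [p1, p2]; ring
  obtain ⟨u, hu⟩ := hd
  rcases Nat.even_or_odd (l1 + k1) with hE | hO
  · refine ⟨⟨l1, k1, e1, hE⟩, ⟨l2, k2, e2, ?_⟩⟩
    obtain ⟨v, hv⟩ := hE
    rw [Nat.odd_iff]
    omega
  · refine ⟨⟨l2, k2, e2, ?_⟩, ⟨l1, k1, e1, hO⟩⟩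
    obtain ⟨v, hv⟩ := hO
    rw [Nat.even_iff]
    omega
end
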